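/- arXiv:1708.07343 — 2 statements merged into one kernel-verified Lean document; each statement's English description precedes it below -/
import Mathlib

section
/- The anisotropic norm function ρ satisfies the triangle inequality: ρ(x + y) ≤ ρ(x) + ρ(y) for all x, y ∈ ℝ^n. -/
open MeasureTheory Real Complex
open scoped FourierTransform ENNReal

noncomputable section

/-- The anisotropic dilation `A_t x = (t^{a_1} x_1, …, t^{a_n} x_n)`. -/
def dil (n : ℕ) (a : Fin n → ℝ) (t : ℝ) (x : EuclideanSpace ℝ (Fin n)) :
    EuclideanSpace ℝ (Fin n) :=
  WithLp.toLp 2 (fun j => t ^ a j * x j)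

lemma euc_norm_mono {n : ℕ} (f g : EuclideanSpace ℝ (Fin n))
    (h : ∀ j, |f j| ≤ |g j|) : ‖f‖ ≤ ‖g‖ := by
  rw [EuclideanSpace.norm_eq, EuclideanSpace.norm_eq]
  apply Real.sqrt_le_sqrt
  apply Finset.sum_le_sum
  intro j _
  have := h j
  simp only [Real.norm_eq_abs]
  exact pow_le_pow_left₀ (abs_nonneg _) this 2

lemma dil_mono {n : ℕ} (a : Fin n → ℝ) (ha : ∀ j, 1 ≤ a j) {s t : ℝ}
    (hs : 0 < s) (hst : s ≤ t) (z : EuclideanSpace ℝ (Fin n)) :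
    ‖dil n a t⁻¹ z‖ ≤ ‖dil n a s⁻¹ z‖ := by
  apply euc_norm_mono
  intro j
  simp only [dil, abs_mul]
  apply mul_le_mul_of_nonneg_right _ (abs_nonneg _)
  have h1 : (0:ℝ) < t := lt_of_lt_of_le hs hst
  rw [_root_.abs_of_nonneg (Real.rpow_nonneg (by positivity) _),
      _root_.abs_of_nonneg (Real.rpow_nonneg (by positivity) _)]
  exact Real.rpow_le_rpow (by positivity) (inv_anti₀ hs hst)
    (le_trans zero_le_one (ha j))

lemma dil_scale {n : ℕ} (a : Fin n → ℝ) (ha : ∀ j, 1 ≤ a j) {s r : ℝ}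
    (hr : 0 < r) (hrs : r ≤ s) (z : EuclideanSpace ℝ (Fin n)) :
    ‖dil n a s⁻¹ z‖ ≤ (r / s) * ‖dil n a r⁻¹ z‖ := by
  have hs : (0:ℝ) < s := lt_of_lt_of_le hr hrs
  have key : ‖dil n a s⁻¹ z‖ ≤ ‖(r/s) • dil n a r⁻¹ z‖ := by
    apply euc_norm_mono
    intro j
    have hcoord : ((r/s) • dil n a r⁻¹ z) j = (r/s) * (r⁻¹ ^ a j * z j) := by simp [dil]
    rw [hcoord]
    simp only [dil, abs_mul, ← mul_assoc]
    apply mul_le_mul_of_nonneg_right _ (abs_nonneg _)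
    have hb : (0:ℝ) < r / s := by positivity
    have hb1 : r / s ≤ 1 := (div_le_one hs).mpr hrs
    have hmul : (s⁻¹ : ℝ) ^ a j = (r/s) ^ a j * (r⁻¹ : ℝ) ^ a j := by
      rw [← Real.mul_rpow (le_of_lt hb) (by positivity)]
      congr 1
      field_simp
    rw [_root_.abs_of_nonneg (Real.rpow_nonneg (by positivity) _), hmul,
        _root_.abs_of_nonneg (Real.rpow_nonneg (by positivity) _), abs_of_pos hb]
    apply mul_le_mul_of_nonneg_right _ (Real.rpow_nonneg (by positivity) _)
    calc (r/s) ^ a j ≤ (r/s) ^ (1:ℝ) :=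
          Real.rpow_le_rpow_of_exponent_ge hb hb1 (ha j)
      _ = r / s := Real.rpow_one _
  calc ‖dil n a s⁻¹ z‖ ≤ ‖(r/s) • dil n a r⁻¹ z‖ := key
    _ = |r/s| * ‖dil n a r⁻¹ z‖ := by rw [norm_smul, Real.norm_eq_abs]
    _ = (r/s) * ‖dil n a r⁻¹ z‖ := by rw [abs_of_pos (by positivity)]

/-- the triangle inequality for the anisotropic norm ρ. -/
theorem stmt_2 (n : ℕ) (a : Fin n → ℝ) (ha : ∀ j, 1 ≤ a j)
    (ρ : EuclideanSpace ℝ (Fin n) → ℝ)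
    (hρ0 : ρ 0 = 0)
    (hρ : ∀ x : EuclideanSpace ℝ (Fin n), x ≠ 0 →
      0 < ρ x ∧ ‖dil n a (ρ x)⁻¹ x‖ = 1)
    (huniq : ∀ x : EuclideanSpace ℝ (Fin n), x ≠ 0 →
      ∀ t : ℝ, 0 < t → ‖dil n a t⁻¹ x‖ = 1 → t = ρ x)
    (x y : EuclideanSpace ℝ (Fin n)) :
    ρ (x + y) ≤ ρ x + ρ y := by
  by_cases hx : x = 0
  · subst hx; simp [hρ0]
  by_cases hy : y = 0
  · subst hy; simp [hρ0]
  obtain ⟨hρx, hnx⟩ := hρ x hx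
  obtain ⟨hρy, hny⟩ := hρ y hy
  by_cases hxy : x + y = 0
  · rw [hxy, hρ0]; positivity
  set s := ρ x + ρ y with hs_def
  have hs : 0 < s := by positivity
  -- norm bound at s
  have hadd : dil n a s⁻¹ (x + y) = dil n a s⁻¹ x + dil n a s⁻¹ y := by
    ext j
    simp [dil, mul_add]
  have hbound : ‖dil n a s⁻¹ (x + y)‖ ≤ 1 := by
    rw [hadd]
    calc ‖dil n a s⁻¹ x + dil n a s⁻¹ y‖
        ≤ ‖dil n a s⁻¹ x‖ + ‖dil n a s⁻¹ y‖ := norm_add_le _ _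
      _ ≤ (ρ x / s) * ‖dil n a (ρ x)⁻¹ x‖ + (ρ y / s) * ‖dil n a (ρ y)⁻¹ y‖ := by
          gcongr
          · exact dil_scale a ha hρx (by linarith) x
          · exact dil_scale a ha hρy (by linarith) y
      _ = ρ x / s + ρ y / s := by rw [hnx, hny, mul_one, mul_one]
      _ = 1 := by field_simp; linarith
  -- conclude ρ (x+y) ≤ s
  by_contra hlt
  push_neg at hlt
  have h1 : (1:ℝ) ≤ ‖dil n a s⁻¹ (x + y)‖ := by
    have := dil_mono a ha hs (le_of_lt hlt) (x + y)
    rw [(hρ _ hxy).2] at this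
    exact this
  have heq : ‖dil n a s⁻¹ (x + y)‖ = 1 := le_antisymm hbound h1
  have := huniq _ hxy s hs heq
  linarith [(hρ _ hxy).1]
end
end

section
/- Let 0 < α < 1 and γ > 0. Then the integral ∫_{ℝ^n} |e^{2πi⟨y,θ⟩} − 1|² ρ(y)^{−γ−2α} dy is finite, uniformly bounded over unit vectors θ ∈ S^{n−1}, where ρ is the anisotropic norm with trace γ = Σ a_j. -/
open MeasureTheory Real Complex
open scoped FourierTransform ENNReal

noncomputable section

lemma exp_bound (v : ℝ) : ‖Complex.exp (v * Complex.I) - 1‖ ^ 2 ≤ min (v ^ 2) 4 := by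
  have h : ‖Complex.exp ((v : ℂ) * Complex.I) - 1‖ ^ 2 = 2 - 2 * Real.cos v := by
    rw [Complex.exp_mul_I, ← Complex.ofReal_cos, ← Complex.ofReal_sin]
    rw [show (Real.cos v : ℂ) + (Real.sin v : ℂ) * Complex.I - 1
        = ((Real.cos v - 1 : ℝ) : ℂ) + (Real.sin v : ℝ) * Complex.I by push_cast; ring]
    rw [Complex.sq_norm, Complex.normSq_add_mul_I]
    nlinarith [Real.sin_sq_add_cos_sq v]
  rw [h]
  refine le_min ?_ ?_
  · nlinarith [Real.one_sub_sq_div_two_le_cos (x := v)]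
  · nlinarith [Real.neg_one_le_cos v]

lemma dil_continuous (n : ℕ) (a : Fin n → ℝ) (ha : ∀ j, 1 ≤ a j)
    (y : EuclideanSpace ℝ (Fin n)) : Continuous fun t : ℝ => dil n a t y := by
  apply (PiLp.continuous_toLp 2 _).comp
  apply continuous_pi
  intro j
  exact (continuous_iff_continuousAt.2 fun s =>
    Real.continuousAt_rpow_const s (a j) (Or.inr (le_trans zero_le_one (ha j)))).mul
    continuous_const

lemma small_norm (n : ℕ) (a : Fin n → ℝ) (ha : ∀ j, 1 ≤ a j)
    (ρ : EuclideanSpace ℝ (Fin n) → ℝ)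
    (hρhom : ∀ t : ℝ, 0 < t → ∀ x, ρ (dil n a t x) = t * ρ x)
    (hρle : ∀ x : EuclideanSpace ℝ (Fin n), ‖x‖ ≤ 1 → ‖x‖ ≤ ρ x)
    (y : EuclideanSpace ℝ (Fin n)) (hy : ρ y < 1) : ‖y‖ ≤ 1 := by
  by_contra hcon
  push_neg at hcon
  have hcont : ContinuousOn (fun s : ℝ => ‖dil n a s y‖) (Set.Icc 0 1) :=
    ((dil_continuous n a ha y).norm).continuousOn
  have h0 : ‖dil n a (0 : ℝ) y‖ = 0 := by
    have : dil n a (0 : ℝ) y = 0 := by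
      ext j
      simp [dil, Real.zero_rpow (by linarith [ha j] : a j ≠ 0)]
    rw [this, norm_zero]
  have h1 : dil n a (1 : ℝ) y = y := by
    ext j; simp [dil]
  have hmem : (1 : ℝ) ∈ Set.Icc ‖dil n a (0:ℝ) y‖ ‖dil n a (1:ℝ) y‖ := by
    rw [h0, h1]; exact ⟨zero_le_one, hcon.le⟩
  obtain ⟨s, hs01, hs⟩ := intermediate_value_Icc (zero_le_one) hcont hmem
  simp only [] at hs
  have hs' : ‖dil n a s y‖ = 1 := hs
  have hspos : 0 < s := by
    rcases lt_or_eq_of_le hs01.1 with h | h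
    · exact h
    · exfalso; rw [← h, h0] at hs'; norm_num at hs'
  have hle := hρle (dil n a s y) (le_of_eq hs')
  rw [hs', hρhom s hspos] at hle
  nlinarith [hs01.2]
lemma scaling (n : ℕ) (a : Fin n → ℝ) (ha : ∀ j, 1 ≤ a j)
    (ρ : EuclideanSpace ℝ (Fin n) → ℝ)
    (hρhom : ∀ t : ℝ, 0 < t → ∀ x, ρ (dil n a t x) = t * ρ x)
    (t : ℝ) (ht : 0 < t) :
    volume {y : EuclideanSpace ℝ (Fin n) | ρ y < t}
      = ENNReal.ofReal (t ^ (∑ j, a j)) * volume {y : EuclideanSpace ℝ (Fin n) | ρ y < 1} := by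
  classical
  set M : Matrix (Fin n) (Fin n) ℝ := Matrix.diagonal (fun j => t ^ a j) with hM
  set e : WithLp 2 (Fin n → ℝ) ≃ₗ[ℝ] (Fin n → ℝ) := WithLp.linearEquiv 2 ℝ (Fin n → ℝ) with he
  set L : EuclideanSpace ℝ (Fin n) →ₗ[ℝ] EuclideanSpace ℝ (Fin n) :=
    (e.symm : (Fin n → ℝ) →ₗ[ℝ] EuclideanSpace ℝ (Fin n)) ∘ₗ Matrix.toLin' M ∘ₗ (e : EuclideanSpace ℝ (Fin n) →ₗ[ℝ] (Fin n → ℝ)) with hLdef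
  have hL : ∀ x : EuclideanSpace ℝ (Fin n), L x = dil n a t x := by
    intro x
    ext j
    show (Matrix.toLin' M) x.ofLp j = t ^ a j * x.ofLp j
    simp [hM, Matrix.toLin'_apply, Matrix.mulVec_diagonal]
  have hdet : LinearMap.det L = t ^ (∑ j, a j) := by
    have h1 : LinearMap.det L = M.det := by
      have h := LinearMap.det_conj (Matrix.toLin' M) e.symm
      simp only [LinearEquiv.symm_symm] at h
      rw [hLdef, h, LinearMap.det_toLin']
    rw [h1, hM, Matrix.det_diagonal]
    have : ∀ s : Finset (Fin n), (∏ j ∈ s, t ^ a j) = t ^ (∑ j ∈ s, a j) := by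
      intro s
      induction s using Finset.induction with
      | empty => simp
      | insert _ _ hj ih =>
        rw [Finset.prod_insert hj, Finset.sum_insert hj, Real.rpow_add ht, ih]
    exact this Finset.univ
  have himg : {y : EuclideanSpace ℝ (Fin n) | ρ y < t} = L '' {y : EuclideanSpace ℝ (Fin n) | ρ y < 1} := by
    ext y
    constructor
    · intro hy
      refine ⟨dil n a t⁻¹ y, ?_, ?_⟩
      · show ρ (dil n a t⁻¹ y) < 1
        rw [hρhom t⁻¹ (inv_pos.2 ht) y]
        calc t⁻¹ * ρ y < t⁻¹ * t := mul_lt_mul_of_pos_left hy (inv_pos.2 ht)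
          _ = 1 := inv_mul_cancel₀ ht.ne'
      · rw [hL]
        ext j
        simp only [dil, WithLp.ofLp_toLp]
        rw [← mul_assoc, ← Real.mul_rpow ht.le (inv_nonneg.2 ht.le),
          mul_inv_cancel₀ ht.ne', Real.one_rpow, one_mul]
    · rintro ⟨x, hx, rfl⟩
      show ρ (L x) < t
      rw [hL, hρhom t ht x]
      calc t * ρ x < t * 1 := mul_lt_mul_of_pos_left hx ht
        _ = t := mul_one t
  rw [himg, Measure.addHaar_image_linearMap, hdet,
    _root_.abs_of_nonneg (Real.rpow_nonneg ht.le _)]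

/-- uniform finiteness of ∫ |e^{2πi⟨y,θ⟩} − 1|² ρ(y)^{−γ−2α} dy over
unit vectors θ, where γ = Σ a_j and 0 < α < 1. -/
theorem stmt_6 (n : ℕ) (hn : 0 < n) (a : Fin n → ℝ) (ha : ∀ j, 1 ≤ a j)
    (ρ : EuclideanSpace ℝ (Fin n) → ℝ)
    (hρ0 : ρ 0 = 0)
    (hρpos : ∀ x : EuclideanSpace ℝ (Fin n), x ≠ 0 → 0 < ρ x)
    (hρhom : ∀ t : ℝ, 0 < t → ∀ x, ρ (dil n a t x) = t * ρ x)
    (hρcont : Continuous ρ)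
    (hρle : ∀ x : EuclideanSpace ℝ (Fin n), ‖x‖ ≤ 1 → ‖x‖ ≤ ρ x)
    (hρge : ∀ x : EuclideanSpace ℝ (Fin n), 1 ≤ ‖x‖ → ρ x ≤ ‖x‖)
    (α : ℝ) (hα : 0 < α ∧ α < 1) :
    ∃ C : ℝ, ∀ θ : EuclideanSpace ℝ (Fin n), ‖θ‖ = 1 →
      ∫⁻ y : EuclideanSpace ℝ (Fin n),
        ENNReal.ofReal (‖Complex.exp (2 * π * (∑ j, y j * θ j) * Complex.I) - 1‖ ^ 2
          * ρ y ^ (-(∑ j, a j) - 2 * α)) ≤ ENNReal.ofReal C := by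
  obtain ⟨hα0, hα1⟩ := hα
  set γ : ℝ := ∑ j, a j with hγ
  have hγ0 : 0 ≤ γ := Finset.sum_nonneg fun j _ => le_trans zero_le_one (ha j)
  set β : ℝ := γ + 2 * α with hβ
  have hβ0 : 0 < β := by positivity
  -- sub-level set of ρ at 1 and its volume
  set V : ℝ≥0∞ := volume {y : EuclideanSpace ℝ (Fin n) | ρ y < 1} with hV
  have hVfin : V < ⊤ := by
    refine lt_of_le_of_lt (measure_mono ?_)
      (measure_closedBall_lt_top (x := (0 : EuclideanSpace ℝ (Fin n))) (r := 1))
    intro y hy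
    simp only [Metric.mem_closedBall, dist_zero_right]
    exact small_norm n a ha ρ hρhom hρle y hy
  -- dyadic annuli
  set A : ℤ → Set (EuclideanSpace ℝ (Fin n)) :=
    fun k => {y | (2:ℝ) ^ k ≤ ρ y ∧ ρ y < (2:ℝ) ^ (k + 1)} with hA
  have hAmeas : ∀ k, MeasurableSet (A k) := by
    intro k
    have : A k = ρ ⁻¹' (Set.Ico ((2:ℝ) ^ k) ((2:ℝ) ^ (k + 1))) := rfl
    rw [this]
    exact hρcont.measurable measurableSet_Ico
  -- per-annulus bounds
  set b : ℤ → ℝ := fun k => min (4 * π ^ 2 * ((2:ℝ) ^ (k + 1)) ^ 2) 4 * ((2:ℝ) ^ k) ^ (-β)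
    with hb
  have hb0 : ∀ k, 0 ≤ b k := by
    intro k
    apply mul_nonneg
    · exact le_min (by positivity) (by norm_num)
    · exact Real.rpow_nonneg (zpow_pos two_pos k).le _
  set c : ℤ → ℝ := fun k => b k * ((2:ℝ) ^ (k + 1)) ^ γ with hc
  have hc0 : ∀ k, 0 ≤ c k := fun k =>
    mul_nonneg (hb0 k) (Real.rpow_nonneg (zpow_pos two_pos _).le _)
  -- rewriting zpow-base rpow as rpow of 2
  have hpow : ∀ (k : ℤ) (x : ℝ), ((2:ℝ) ^ k) ^ x = (2:ℝ) ^ ((k : ℝ) * x) := by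
    intro k x
    rw [← Real.rpow_intCast 2 k, ← Real.rpow_mul (by norm_num : (0:ℝ) ≤ 2)]
  -- c in clean form
  set d : ℤ → ℝ := fun k =>
      min (4 * π ^ 2 * ((2:ℝ) ^ (k + 1)) ^ 2) 4 * (2:ℝ) ^ (γ - (k : ℝ) * (2 * α)) with hd
  have hcd : ∀ k, c k = d k := by
    intro k
    show b k * ((2:ℝ) ^ (k + 1)) ^ γ = _
    rw [hb]
    simp only []
    rw [hpow k (-β), hpow (k + 1) γ, mul_assoc, ← Real.rpow_add two_pos]
    congr 1
    push_cast
    rw [hβ]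
    ring
  -- summability of c
  have hsum : Summable c := by
    rw [show c = d from funext hcd]
    have h2 : (0:ℝ) ≤ 2 := by norm_num
    apply Summable.of_nat_of_neg
    · -- positive side
      set r1 : ℝ := (2:ℝ) ^ (-(2 * α)) with hr1
      have hr10 : 0 ≤ r1 := Real.rpow_nonneg h2 _
      have hr11 : r1 < 1 := Real.rpow_lt_one_of_one_lt_of_neg one_lt_two (by linarith)
      apply Summable.of_nonneg_of_le
        (fun m => mul_nonneg (le_min (by positivity) (by norm_num))
          (Real.rpow_nonneg h2 _))
        (fun m => ?_) ((summable_geometric_of_lt_one hr10 hr11).mul_left (4 * (2:ℝ) ^ γ))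
      show min (4 * π ^ 2 * ((2:ℝ) ^ ((m : ℤ) + 1)) ^ 2) 4 * (2:ℝ) ^ (γ - (m : ℝ) * (2 * α))
        ≤ 4 * (2:ℝ) ^ γ * r1 ^ m
      have hrw : (2:ℝ) ^ (γ - (m : ℝ) * (2 * α)) = (2:ℝ) ^ γ * r1 ^ m := by
        rw [show γ - (m : ℝ) * (2 * α) = γ + (-(2 * α)) * (m : ℝ) by ring,
          Real.rpow_add two_pos, Real.rpow_mul h2, Real.rpow_natCast]
      rw [hrw, ← mul_assoc]
      apply mul_le_mul_of_nonneg_right _ (pow_nonneg hr10 m)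
      apply mul_le_mul_of_nonneg_right (min_le_right _ _) (Real.rpow_nonneg h2 _)
    · -- negative side
      set r2 : ℝ := (2:ℝ) ^ (2 * α) / 4 with hr2
      have hr20 : 0 ≤ r2 := by positivity
      have hr21 : r2 < 1 := by
        rw [hr2, div_lt_one (by norm_num : (0:ℝ) < 4)]
        calc (2:ℝ) ^ (2 * α) < (2:ℝ) ^ (2:ℝ) :=
              Real.rpow_lt_rpow_of_exponent_lt one_lt_two (by linarith)
          _ = 4 := by
              rw [show (2:ℝ) = ((2:ℕ) : ℝ) by norm_num, Real.rpow_natCast]; norm_num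
      have hle : ∀ m : ℕ, d (-(m:ℤ)) ≤ 16 * π ^ 2 * (2:ℝ) ^ γ * r2 ^ m := by
        intro m
        rw [hd]
        simp only [Int.cast_neg, Int.cast_natCast]
        have h1 : ((2:ℝ) ^ (-(m:ℤ) + 1)) ^ 2 = 4 * ((4:ℝ)⁻¹) ^ m := by
          have hsplit : ((2:ℝ) ^ (-(m:ℤ) + 1)) = 2 * ((2:ℝ)⁻¹) ^ m := by
            rw [zpow_add₀ (by norm_num : (2:ℝ) ≠ 0), zpow_neg, zpow_natCast, zpow_one, inv_pow]
            ring
          rw [hsplit, mul_pow, pow_right_comm]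
          norm_num
        have h2' : (2:ℝ) ^ (γ - -(m:ℝ) * (2 * α)) = (2:ℝ) ^ γ * ((2:ℝ) ^ (2 * α)) ^ m := by
          rw [show γ - -(m:ℝ) * (2 * α) = γ + (2 * α) * (m:ℝ) by ring,
            Real.rpow_add two_pos, Real.rpow_mul h2, Real.rpow_natCast]
        calc min (4 * π ^ 2 * ((2:ℝ) ^ (-(m:ℤ) + 1)) ^ 2) 4 * (2:ℝ) ^ (γ - -(m:ℝ) * (2 * α))
            ≤ (4 * π ^ 2 * ((2:ℝ) ^ (-(m:ℤ) + 1)) ^ 2) * (2:ℝ) ^ (γ - -(m:ℝ) * (2 * α)) :=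
              mul_le_mul_of_nonneg_right (min_le_left _ _) (Real.rpow_nonneg h2 _)
          _ = 16 * π ^ 2 * (2:ℝ) ^ γ * r2 ^ m := by
              rw [h1, h2', hr2, div_pow, div_eq_mul_inv, ← inv_pow]
              ring
      exact Summable.of_nonneg_of_le
        (fun m => mul_nonneg (le_min (by positivity) (by norm_num))
          (Real.rpow_nonneg h2 _)) hle
        ((summable_geometric_of_lt_one hr20 hr21).mul_left (16 * π ^ 2 * (2:ℝ) ^ γ))
  -- value of the total bound
  set Ξ : ℝ≥0∞ := ENNReal.ofReal (∑' k, c k) * V with hΞ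
  have hΞfin : Ξ ≠ ⊤ := by
    rw [hΞ]
    exact ENNReal.mul_ne_top ENNReal.ofReal_ne_top hVfin.ne
  refine ⟨Ξ.toReal, ?_⟩
  intro θ hθ
  rw [ENNReal.ofReal_toReal hΞfin, hΞ]
  -- pointwise bound
  have key : ∀ y : EuclideanSpace ℝ (Fin n),
      ENNReal.ofReal (‖Complex.exp (2 * π * (∑ j, y j * θ j) * Complex.I) - 1‖ ^ 2
          * ρ y ^ (-γ - 2 * α))
        ≤ ∑' k, (A k).indicator (fun _ => ENNReal.ofReal (b k)) y := by
    intro y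
    by_cases hy : y = 0
    · subst hy
      rw [hρ0, Real.zero_rpow (ne_of_lt (show -γ - 2 * α < 0 by nlinarith)), mul_zero,
        ENNReal.ofReal_zero]
      exact zero_le
    · have hρy : 0 < ρ y := hρpos y hy
      obtain ⟨k, hk1, hk2⟩ := exists_mem_Ico_zpow hρy one_lt_two
      refine le_trans ?_ (ENNReal.le_tsum k)
      rw [Set.indicator_of_mem (show y ∈ A k from ⟨hk1, hk2⟩)]
      apply ENNReal.ofReal_le_ofReal
      have hsabs : |∑ j, y j * θ j| ≤ ‖y‖ := by
        have h := abs_real_inner_le_norm y θ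
        rw [hθ, mul_one] at h
        have hin : (inner ℝ y θ : ℝ) = ∑ j, y j * θ j := by
          simp [PiLp.inner_apply, RCLike.inner_apply, conj_trivial, mul_comm]
        rwa [hin] at h
      have e1 : ‖Complex.exp (2 * π * (∑ j, y j * θ j) * Complex.I) - 1‖ ^ 2
          ≤ min (4 * π ^ 2 * ((2:ℝ) ^ (k + 1)) ^ 2) 4 := by
        have hcast : (2 * (π:ℂ) * ((∑ j, y j * θ j : ℝ) : ℂ) * Complex.I)
            = ((2 * π * (∑ j, y j * θ j) : ℝ) : ℂ) * Complex.I := by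
          push_cast; ring
        refine le_trans ?_ (le_min ?_ (min_le_right ((2 * π * (∑ j, y j * θ j)) ^ 2) 4))
        · rw [hcast]
          exact exp_bound _
        · by_cases hρ1 : ρ y < 1
          · have hy1 : ‖y‖ ≤ 1 := small_norm n a ha ρ hρhom hρle y hρ1
            have hyle : ‖y‖ ≤ ρ y := hρle y hy1
            have hsq : (∑ j, y j * θ j) ^ 2 ≤ ρ y ^ 2 := by
              have habs := abs_le.mp (le_trans hsabs hyle)
              exact sq_le_sq' habs.1 habs.2
            calc min ((2 * π * (∑ j, y j * θ j)) ^ 2) 4 ≤ (2 * π * (∑ j, y j * θ j)) ^ 2 :=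
                  min_le_left _ _
              _ = 4 * π ^ 2 * (∑ j, y j * θ j) ^ 2 := by ring
              _ ≤ 4 * π ^ 2 * (ρ y) ^ 2 :=
                  mul_le_mul_of_nonneg_left hsq (by positivity)
              _ ≤ 4 * π ^ 2 * ((2:ℝ) ^ (k + 1)) ^ 2 :=
                  mul_le_mul_of_nonneg_left (pow_le_pow_left₀ hρy.le hk2.le 2) (by positivity)
          · push_neg at hρ1
            have h21 : (1:ℝ) ≤ (2:ℝ) ^ (k + 1) := le_trans hρ1 hk2.le
            refine le_trans (min_le_right _ _) ?_
            nlinarith [Real.pi_gt_three, mul_self_le_mul_self zero_le_one h21,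
              sq_nonneg π, sq_nonneg ((2:ℝ) ^ (k + 1))]
      have e2 : ρ y ^ (-γ - 2 * α) ≤ ((2:ℝ) ^ k) ^ (-β) := by
        rw [show -γ - 2 * α = -β by rw [hβ]; ring]
        exact Real.rpow_le_rpow_of_nonpos (zpow_pos two_pos k) hk1 (by linarith)
      calc ‖Complex.exp (2 * π * (∑ j, y j * θ j) * Complex.I) - 1‖ ^ 2 * ρ y ^ (-γ - 2 * α)
          ≤ min (4 * π ^ 2 * ((2:ℝ) ^ (k + 1)) ^ 2) 4 * ((2:ℝ) ^ k) ^ (-β) :=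
            mul_le_mul e1 e2 (Real.rpow_nonneg hρy.le _)
              (le_min (by positivity) (by norm_num))
        _ = b k := rfl
  -- main chain
  calc ∫⁻ y : EuclideanSpace ℝ (Fin n),
        ENNReal.ofReal (‖Complex.exp (2 * π * (∑ j, y j * θ j) * Complex.I) - 1‖ ^ 2
          * ρ y ^ (-γ - 2 * α))
      ≤ ∫⁻ y, ∑' k, (A k).indicator (fun _ => ENNReal.ofReal (b k)) y :=
        lintegral_mono key
    _ = ∑' k, ∫⁻ y, (A k).indicator (fun _ => ENNReal.ofReal (b k)) y :=
        lintegral_tsum fun k => (measurable_const.indicator (hAmeas k)).aemeasurable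
    _ = ∑' k, ENNReal.ofReal (b k) * volume (A k) := by
        refine tsum_congr fun k => ?_
        rw [lintegral_indicator (hAmeas k), setLIntegral_const]
    _ ≤ ∑' k, ENNReal.ofReal (b k) * (ENNReal.ofReal (((2:ℝ) ^ (k + 1)) ^ γ) * V) := by
        refine ENNReal.tsum_le_tsum fun k => ?_
        refine mul_le_mul_right ?_ _
        have hsub : A k ⊆ {y : EuclideanSpace ℝ (Fin n) | ρ y < (2:ℝ) ^ (k + 1)} :=
          fun y hy => hy.2
        refine le_trans (measure_mono hsub) ?_
        rw [scaling n a ha ρ hρhom ((2:ℝ) ^ (k + 1)) (zpow_pos two_pos _), hV, hγ]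
    _ = ∑' k, ENNReal.ofReal (c k) * V := by
        refine tsum_congr fun k => ?_
        rw [hc]
        simp only []
        rw [ENNReal.ofReal_mul (hb0 k), mul_assoc]
    _ = ENNReal.ofReal (∑' k, c k) * V := by
        rw [ENNReal.tsum_mul_right, ENNReal.ofReal_tsum_of_nonneg hc0 hsum]
end
end
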